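/- With the notation of the previous filtration setup (V of dimension n with basis e₁,…,eₙ and a filtration with simple jumps h₁ < … < hₙ, and orderings j_i(w) attached to each permutation w), if j_i(w∘(i,i+1)) = j_i(w) for all 1 ≤ i ≤ n−1, then (j₁(w), …, jₙ(w)) = (h₁, …, hₙ), i.e. the ordering attached to w is strictly increasing. -/

import Mathlib

open Module Submodule

lemma aux_rank_sup_singleton {E V : Type*} [Field E] [AddCommGroup V] [Module E V]
    [FiniteDimensional E V] (X : Submodule E V) (x : V) :
    finrank E ↥(X ⊔ span E {x}) ≤ finrank E ↥X + 1 := by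
  have h := Submodule.finrank_sup_add_finrank_inf_eq X (span E {x})
  have h2 : finrank E ↥(span E {x}) ≤ 1 := by
    rcases eq_or_ne x 0 with rfl | hx
    · rw [Submodule.span_zero_singleton, finrank_bot]
      omega
    · rw [finrank_span_singleton hx]
  omega

lemma aux_rank_inf_sup {E V : Type*} [Field E] [AddCommGroup V] [Module E V]
    [FiniteDimensional E V] (A B : Submodule E V) (x : V) :
    finrank E ↥(A ⊓ (B ⊔ span E {x})) ≤ finrank E ↥(A ⊓ B) + 1 := by
  set X := A ⊓ (B ⊔ span E {x}) with hX
  have h1 : X ⊓ B = A ⊓ B := by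
    rw [hX, inf_assoc, inf_eq_right.mpr (le_sup_left : B ≤ B ⊔ span E {x})]
  have h2 : X ⊔ B ≤ B ⊔ span E {x} := sup_le inf_le_right le_sup_left
  have h3 := Submodule.finrank_sup_add_finrank_inf_eq X B
  have h4 : finrank E ↥(X ⊔ B) ≤ finrank E ↥(B ⊔ span E {x}) := Submodule.finrank_mono h2
  have h5 := aux_rank_sup_singleton B x
  have h6 : finrank E ↥X ≤ finrank E ↥(X ⊔ B) := Submodule.finrank_mono le_sup_left
  rw [h1] at h3
  omega

lemma aux_upclosed {n : ℕ} (T : Finset (Fin n))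
    (hT : ∀ a b : Fin n, a ≤ b → a ∈ T → b ∈ T) (i : Fin n)
    (hcard : n - (i : ℕ) ≤ T.card) : i ∈ T := by
  by_contra hi
  have hsub : T ⊆ Finset.Ioi i := by
    intro k hk
    rw [Finset.mem_Ioi]
    by_contra hlt
    exact hi (hT k i (le_of_not_gt hlt) hk)
  have := Finset.card_le_card hsub
  rw [Fin.card_Ioi] at this
  have := i.isLt
  omega

lemma aux_sm_count {n : ℕ} {f : Fin n → ℤ} (hf : StrictMono f) (i : Fin n) :
    (Finset.univ.filter fun k => f i ≤ f k).card = n - (i : ℕ) := by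
  have : (Finset.univ.filter fun k => f i ≤ f k) = Finset.Ici i := by
    ext k
    simp [hf.le_iff_le]
  rw [this, Fin.card_Ici]

/-- Setup:  Let `V` be an `n`-dimensional
`E`-vector space with basis `e₁,…,eₙ`, equipped with an exhaustive decreasing filtration
`(Filⁱ V)_{i∈ℤ}` having exactly `n` jumps `h₁ < … < hₙ`, each of multiplicity one.
For `w ∈ Sₙ` and `1 ≤ i ≤ n` let `V_i^w = span(e_{w(1)},…,e_{w(i)})` and let `j_i(w)` be the
unique jump of the filtration induced on the line `V_i^w / V_{i-1}^w` (here characterized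
by `(Fil^m ∩ V_i^w) + V_{i-1}^w ≠ (Fil^{m+1} ∩ V_i^w) + V_{i-1}^w`).
**Statement 4.** If `j_i(w∘(i,i+1)) = j_i(w)` for all `1 ≤ i ≤ n−1`, then
`(j₁(w),…,jₙ(w)) = (h₁,…,hₙ)`, i.e. the ordering attached to `w` is strictly increasing. -/
theorem stmt4 {E V : Type*} [Field E] [AddCommGroup V] [Module E V]
    {n : ℕ} (hn : 0 < n) (e : Basis (Fin n) E V)
    (Fil : ℤ → Submodule E V) (hanti : Antitone Fil)
    (htop : ∃ N : ℤ, ∀ m ≤ N, Fil m = ⊤) (hbot : ∃ N : ℤ, ∀ m, N ≤ m → Fil m = ⊥)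
    (h : Fin n → ℤ) (hmono : StrictMono h)
    (hjumps : ∀ m : ℤ, Fil m ≠ Fil (m + 1) ↔ ∃ i : Fin n, m = h i)
    (hmult : ∀ i : Fin n,
      Module.finrank E (↥(Fil (h i)) ⧸ (Fil (h i + 1)).comap (Fil (h i)).subtype) = 1)
    (S : Equiv.Perm (Fin n) → ℕ → Submodule E V)
    (hS : ∀ w i, S w i = Submodule.span E {x | ∃ k : Fin n, (k : ℕ) < i ∧ x = e (w k)})
    (j : Equiv.Perm (Fin n) → Fin n → ℤ)
    (hj : ∀ (w : Equiv.Perm (Fin n)) (i : Fin n),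
      ((Fil (j w i) ⊓ S w ((i : ℕ) + 1)) ⊔ S w (i : ℕ) ≠
        (Fil (j w i + 1) ⊓ S w ((i : ℕ) + 1)) ⊔ S w (i : ℕ)) ∧
      ∀ m : ℤ, ((Fil m ⊓ S w ((i : ℕ) + 1)) ⊔ S w (i : ℕ) ≠
        (Fil (m + 1) ⊓ S w ((i : ℕ) + 1)) ⊔ S w (i : ℕ)) → m = j w i)
    (w : Equiv.Perm (Fin n))
    (hfix : ∀ i i' : Fin n, (i' : ℕ) = (i : ℕ) + 1 →
      j (w * Equiv.swap i i') i = j w i) :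
    j w = h := by
  haveI : FiniteDimensional E V := Module.Basis.finiteDimensional_of_finite e
  have hFV : finrank E V = n := by rw [finrank_eq_card_basis e, Fintype.card_fin]
  -- ## Part I : dimension of the filtration
  have hconst : ∀ m : ℤ, (∀ i : Fin n, m ≠ h i) → Fil m = Fil (m + 1) := by
    intro m hm
    by_contra hne
    obtain ⟨i, hi⟩ := (hjumps m).1 hne
    exact hm i hi
  have hdrop : ∀ i : Fin n, finrank E ↥(Fil (h i)) = finrank E ↥(Fil (h i + 1)) + 1 := by
    intro i
    have hle : Fil (h i + 1) ≤ Fil (h i) := hanti (by omega)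
    have h2 := Submodule.finrank_quotient_add_finrank ((Fil (h i + 1)).comap (Fil (h i)).subtype)
    rw [hmult i, (Submodule.comapSubtypeEquivOfLe hle).finrank_eq] at h2
    omega
  have hsmall : ∀ m : ℤ, m ≤ h ⟨0, hn⟩ → Fil m = ⊤ := by
    intro m hm
    obtain ⟨N, hN⟩ := htop
    rcases le_or_gt m N with h' | h'
    · exact hN m h'
    · have key : ∀ k : ℤ, k ≤ m → Fil k = Fil m := by
        intro k hk
        refine Int.le_induction_down (motive := fun k _ => Fil k = Fil m) rfl ?_ k hk
        intro l hl ih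
        have hstep : Fil (l - 1) = Fil l := by
          have := hconst (l - 1) (fun i hi => by
            have := hmono.monotone (show (⟨0, hn⟩ : Fin n) ≤ i from Fin.mk_le_of_le_val (Nat.zero_le _))
            omega)
          rw [this]; ring_nf
        rw [hstep]; exact ih
      rw [← key N (le_of_lt h'), hN N le_rfl]
  have hdim : ∀ m : ℤ, finrank E ↥(Fil m) =
      (Finset.univ.filter (fun k : Fin n => m ≤ h k)).card := by
    have main : ∀ m : ℤ, h ⟨0, hn⟩ ≤ m →
        finrank E ↥(Fil m) = (Finset.univ.filter (fun k : Fin n => m ≤ h k)).card := by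
      intro m hm
      refine Int.le_induction
        (motive := fun m _ => finrank E ↥(Fil m) = (Finset.univ.filter (fun k : Fin n => m ≤ h k)).card)
        ?_ ?_ m hm
      · show finrank E ↥(Fil (h ⟨0, hn⟩)) = _
        rw [hsmall _ le_rfl, finrank_top, hFV]
        have : (Finset.univ.filter (fun k : Fin n => h ⟨0, hn⟩ ≤ h k)) = Finset.univ := by
          refine Finset.filter_true_of_mem (fun k _ => ?_)
          exact hmono.monotone (Fin.mk_le_of_le_val (Nat.zero_le _))
        rw [this, Finset.card_univ, Fintype.card_fin]
      · intro l hl ih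
        by_cases hc : ∃ i : Fin n, l = h i
        · obtain ⟨i, rfl⟩ := hc
          have hfilt : (Finset.univ.filter (fun k : Fin n => h i + 1 ≤ h k)) =
              (Finset.univ.filter (fun k : Fin n => h i ≤ h k)).erase i := by
            ext k
            simp only [Finset.mem_filter, Finset.mem_erase, Finset.mem_univ, true_and]
            constructor
            · intro hk
              refine ⟨fun hki => by subst hki; omega, by omega⟩
            · rintro ⟨hki, hk⟩
              rcases lt_or_eq_of_le hk with h' | h'
              · omega
              · exact absurd (hmono.injective h'.symm) hki
          have hi_mem : i ∈ Finset.univ.filter (fun k : Fin n => h i ≤ h k) := by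
            simp
          rw [hfilt, Finset.card_erase_of_mem hi_mem, hdrop i] at *
          omega
        · push_neg at hc
          have hfilt : (Finset.univ.filter (fun k : Fin n => l + 1 ≤ h k)) =
              (Finset.univ.filter (fun k : Fin n => l ≤ h k)) := by
            ext k
            simp only [Finset.mem_filter, Finset.mem_univ, true_and]
            constructor
            · omega
            · intro hk
              rcases lt_or_eq_of_le hk with h' | h'
              · omega
              · exact absurd h' (hc k)
          rw [hfilt, ← hconst l hc, ih]
    intro m
    rcases le_or_gt (h ⟨0, hn⟩) m with h' | h'
    · exact main m h'
    · rw [hsmall m (le_of_lt h'), finrank_top, hFV]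
      have : (Finset.univ.filter (fun k : Fin n => m ≤ h k)) = Finset.univ := by
        refine Finset.filter_true_of_mem (fun k _ => ?_)
        have := hmono.monotone (show (⟨0, hn⟩ : Fin n) ≤ k from Fin.mk_le_of_le_val (Nat.zero_le _))
        omega
      rw [this, Finset.card_univ, Fintype.card_fin]
  -- ## Part II : the subspaces `S u i`
  have hmemS : ∀ (u : Equiv.Perm (Fin n)) (i : ℕ) (x : V),
      x ∈ S u i ↔ ∀ k : Fin n, e.repr x (u k) ≠ 0 → (k : ℕ) < i := by
    intro u i x
    have himg : {x | ∃ k : Fin n, (k : ℕ) < i ∧ x = e (u k)} =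
        (e.reindex u.symm) '' {k : Fin n | (k : ℕ) < i} := by
      ext y
      simp only [Set.mem_setOf_eq, Set.mem_image, Basis.reindex_apply, Equiv.symm_symm]
      constructor
      · rintro ⟨k, hk, rfl⟩; exact ⟨k, hk, rfl⟩
      · rintro ⟨k, hk, rfl⟩; exact ⟨k, hk, rfl⟩
    rw [hS, himg, Basis.mem_span_image]
    constructor
    · intro hsub k hk
      exact hsub (by
        simp only [Finset.coe_sort_coe, Finsupp.mem_support_iff, Finset.mem_coe]
        rw [Basis.repr_reindex_apply]
        simpa using hk)
    · intro hall k hk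
      simp only [Finset.mem_coe, Finsupp.mem_support_iff, Basis.repr_reindex_apply,
        Equiv.symm_symm] at hk
      exact hall k hk
  have hb_mem : ∀ (u : Equiv.Perm (Fin n)) (i : ℕ) (k : Fin n), (k : ℕ) < i → e (u k) ∈ S u i := by
    intro u i k hk
    rw [hS]
    exact Submodule.subset_span ⟨k, hk, rfl⟩
  have hb_notmem : ∀ (u : Equiv.Perm (Fin n)) (i : ℕ) (k : Fin n), ¬ (k : ℕ) < i →
      e (u k) ∉ S u i := by
    intro u i k hk hmem
    rw [hmemS] at hmem
    refine hk (hmem k ?_)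
    rw [Basis.repr_self, Finsupp.single_eq_same]
    exact one_ne_zero
  have hSmono : ∀ (u : Equiv.Perm (Fin n)) (i i' : ℕ), i ≤ i' → S u i ≤ S u i' := by
    intro u i i' hii'
    rw [hS, hS]
    apply Submodule.span_mono
    rintro x ⟨k, hk, rfl⟩
    exact ⟨k, lt_of_lt_of_le hk hii', rfl⟩
  have hS0 : ∀ u : Equiv.Perm (Fin n), S u 0 = ⊥ := by
    intro u
    rw [hS]
    convert Submodule.span_empty
    ext x; simp
  have hStop : ∀ u : Equiv.Perm (Fin n), S u n = ⊤ := by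
    intro u
    rw [eq_top_iff]
    intro x _
    exact (hmemS u n x).mpr fun k _ => k.isLt
  have hSsucc : ∀ (u : Equiv.Perm (Fin n)) (i : Fin n),
      S u ((i : ℕ) + 1) = S u (i : ℕ) ⊔ span E {e (u i)} := by
    intro u i
    rw [hS, hS]
    rw [show {x | ∃ k : Fin n, (k : ℕ) < (i : ℕ) + 1 ∧ x = e (u k)} =
        {x | ∃ k : Fin n, (k : ℕ) < (i : ℕ) ∧ x = e (u k)} ∪ {e (u i)} from ?_,
      Submodule.span_union]
    ext y
    simp only [Set.mem_union, Set.mem_setOf_eq, Set.mem_singleton_iff]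
    constructor
    · rintro ⟨k, hk, rfl⟩
      rcases Nat.lt_succ_iff_lt_or_eq.mp hk with h' | h'
      · exact Or.inl ⟨k, h', rfl⟩
      · exact Or.inr (by rw [Fin.ext h'])
    · rintro (⟨k, hk, rfl⟩ | rfl)
      · exact ⟨k, Nat.lt_succ_of_lt hk, rfl⟩
      · exact ⟨i, Nat.lt_succ_self _, rfl⟩
  have hSrank : ∀ (u : Equiv.Perm (Fin n)) (i : ℕ), i ≤ n → finrank E ↥(S u i) = i := by
    intro u i
    induction i with
    | zero => intro _; rw [hS0, finrank_bot]
    | succ i ih =>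
      intro hi
      have hin : i < n := hi
      have hlt : S u i < S u (i + 1) := by
        refine lt_of_le_of_ne (hSmono u i (i + 1) (Nat.le_succ _)) (fun heq => ?_)
        exact hb_notmem u i ⟨i, hin⟩ (lt_irrefl i)
          (heq ▸ hb_mem u (i + 1) ⟨i, hin⟩ (Nat.lt_succ_self _))
      have h1 := Submodule.finrank_lt_finrank_of_lt hlt
      have h2 : finrank E ↥(S u (i + 1)) ≤ finrank E ↥(S u i) + 1 := by
        rw [hSsucc u ⟨i, hin⟩]
        exact aux_rank_sup_singleton _ _
      rw [ih (le_of_lt hin)] at *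
      omega
  -- ## Part III : characterization of `j` as a threshold
  have hPanti : ∀ (u : Equiv.Perm (Fin n)) (i : Fin n) (m m' : ℤ), m ≤ m' →
      ¬ (Fil m' ⊓ S u ((i : ℕ) + 1) ≤ S u (i : ℕ)) →
      ¬ (Fil m ⊓ S u ((i : ℕ) + 1) ≤ S u (i : ℕ)) := by
    intro u i m m' hmm' hP hle
    exact hP (le_trans (inf_le_inf_right _ (hanti hmm')) hle)
  have hcov : ∀ (u : Equiv.Perm (Fin n)) (i : Fin n) (x : V), x ∈ S u ((i : ℕ) + 1) →
      x ∉ S u (i : ℕ) → S u (i : ℕ) ⊔ span E {x} = S u ((i : ℕ) + 1) := by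
    intro u i x hx hxn
    have hle : S u (i : ℕ) ⊔ span E {x} ≤ S u ((i : ℕ) + 1) :=
      sup_le (hSmono u i (i + 1) (Nat.le_succ _)) ((Submodule.span_singleton_le_iff_mem x _).mpr hx)
    refine Submodule.eq_of_le_of_finrank_le hle ?_
    rw [hSrank u ((i : ℕ) + 1) i.isLt]
    have hlt : S u (i : ℕ) < S u (i : ℕ) ⊔ span E {x} := by
      refine lt_of_le_of_ne le_sup_left (fun heq => hxn ?_)
      rw [heq]
      exact Submodule.mem_sup_right (Submodule.mem_span_singleton_self x)
    have := Submodule.finrank_lt_finrank_of_lt hlt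
    rw [hSrank u i (le_of_lt i.isLt)] at this
    omega
  have key2 : ∀ (u : Equiv.Perm (Fin n)) (i : Fin n) (m : ℤ),
      ¬ (Fil m ⊓ S u ((i : ℕ) + 1) ≤ S u (i : ℕ)) →
      (Fil m ⊓ S u ((i : ℕ) + 1)) ⊔ S u (i : ℕ) = S u ((i : ℕ) + 1) := by
    intro u i m hP
    obtain ⟨x, hx, hxn⟩ := SetLike.not_le_iff_exists.mp hP
    refine le_antisymm (sup_le inf_le_right (hSmono u i (i + 1) (Nat.le_succ _))) ?_
    calc S u ((i : ℕ) + 1) = S u (i : ℕ) ⊔ span E {x} :=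
          (hcov u i x (Submodule.mem_inf.mp hx).2 hxn).symm
      _ ≤ (Fil m ⊓ S u ((i : ℕ) + 1)) ⊔ S u (i : ℕ) := by
          refine sup_le le_sup_right ?_
          rw [Submodule.span_singleton_le_iff_mem]
          exact Submodule.mem_sup_left hx
  have hPj : ∀ (u : Equiv.Perm (Fin n)) (i : Fin n),
      ¬ (Fil (j u i) ⊓ S u ((i : ℕ) + 1) ≤ S u (i : ℕ)) ∧
      (Fil (j u i + 1) ⊓ S u ((i : ℕ) + 1) ≤ S u (i : ℕ)) := by
    intro u i
    have hne := (hj u i).1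
    rcases em (Fil (j u i) ⊓ S u ((i : ℕ) + 1) ≤ S u (i : ℕ)) with hP | hP
    · exfalso
      have hP1 : Fil (j u i + 1) ⊓ S u ((i : ℕ) + 1) ≤ S u (i : ℕ) :=
        le_trans (inf_le_inf_right _ (hanti (by omega))) hP
      exact hne ((sup_eq_right.mpr hP).trans (sup_eq_right.mpr hP1).symm)
    · refine ⟨hP, ?_⟩
      by_contra hP1
      exact hne ((key2 u i _ hP).trans (key2 u i _ hP1).symm)
  have hPiff : ∀ (u : Equiv.Perm (Fin n)) (i : Fin n) (m : ℤ),
      ¬ (Fil m ⊓ S u ((i : ℕ) + 1) ≤ S u (i : ℕ)) ↔ m ≤ j u i := by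
    intro u i m
    constructor
    · intro hP
      by_contra hgt
      push_neg at hgt
      exact (hPanti u i (j u i + 1) m (by omega) hP) (hPj u i).2
    · intro hle
      exact hPanti u i m (j u i) hle (hPj u i).1
  -- ## Part IV : dimension counting
  have hPrank : ∀ (u : Equiv.Perm (Fin n)) (i : Fin n) (m : ℤ),
      finrank E ↥(Fil m ⊓ S u ((i : ℕ) + 1)) =
        finrank E ↥(Fil m ⊓ S u (i : ℕ)) + (if m ≤ j u i then 1 else 0) := by
    intro u i m
    by_cases hc : m ≤ j u i
    · rw [if_pos hc]
      have hP := (hPiff u i m).mpr hc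
      obtain ⟨x, hx, hxn⟩ := SetLike.not_le_iff_exists.mp hP
      have hlt : Fil m ⊓ S u (i : ℕ) < Fil m ⊓ S u ((i : ℕ) + 1) := by
        refine lt_of_le_of_ne (inf_le_inf_left _ (hSmono u i (i + 1) (Nat.le_succ _)))
          (fun heq => ?_)
        rw [← heq] at hx
        exact hxn (Submodule.mem_inf.mp hx).2
      have h1 := Submodule.finrank_lt_finrank_of_lt hlt
      have h2 : finrank E ↥(Fil m ⊓ S u ((i : ℕ) + 1)) ≤
          finrank E ↥(Fil m ⊓ S u (i : ℕ)) + 1 := by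
        rw [hSsucc u i]
        exact aux_rank_inf_sup _ _ _
      omega
    · rw [if_neg hc]
      have hP : Fil m ⊓ S u ((i : ℕ) + 1) ≤ S u (i : ℕ) :=
        not_not.mp (fun hP => hc ((hPiff u i m).mp hP))
      have heq : Fil m ⊓ S u ((i : ℕ) + 1) = Fil m ⊓ S u (i : ℕ) :=
        le_antisymm (le_inf inf_le_left hP) (inf_le_inf_left _ (hSmono u i (i + 1) (Nat.le_succ _)))
      rw [heq, Nat.add_zero]
  have hcount : ∀ (u : Equiv.Perm (Fin n)) (m : ℤ) (i : ℕ), i ≤ n →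
      finrank E ↥(Fil m ⊓ S u i) =
        (Finset.univ.filter (fun k : Fin n => (k : ℕ) < i ∧ m ≤ j u k)).card := by
    intro u m i
    induction i with
    | zero =>
      intro _
      rw [hS0 u, inf_bot_eq, finrank_bot]
      symm
      rw [Finset.card_eq_zero]
      ext k; simp
    | succ i ih =>
      intro hi
      have hin : i < n := hi
      have hp := hPrank u ⟨i, hin⟩ m
      rw [show ((⟨i, hin⟩ : Fin n) : ℕ) = i from rfl] at hp
      rw [hp, ih (le_of_lt hin)]
      by_cases hc : m ≤ j u ⟨i, hin⟩
      · rw [if_pos hc]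
        have hins : (Finset.univ.filter (fun k : Fin n => (k : ℕ) < i + 1 ∧ m ≤ j u k)) =
            insert ⟨i, hin⟩ (Finset.univ.filter (fun k : Fin n => (k : ℕ) < i ∧ m ≤ j u k)) := by
          ext k
          simp only [Finset.mem_filter, Finset.mem_insert, Finset.mem_univ, true_and]
          constructor
          · rintro ⟨hk1, hk2⟩
            rcases Nat.lt_succ_iff_lt_or_eq.mp hk1 with h' | h'
            · exact Or.inr ⟨h', hk2⟩
            · exact Or.inl (Fin.ext h')
          · rintro (rfl | ⟨hk1, hk2⟩)
            · exact ⟨Nat.lt_succ_self _, hc⟩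
            · exact ⟨Nat.lt_succ_of_lt hk1, hk2⟩
        rw [hins, Finset.card_insert_of_notMem (by simp)]
      · rw [if_neg hc, Nat.add_zero]
        congr 1
        ext k
        simp only [Finset.mem_filter, Finset.mem_univ, true_and]
        constructor
        · rintro ⟨hk1, hk2⟩
          exact ⟨Nat.lt_succ_of_lt hk1, hk2⟩
        · rintro ⟨hk1, hk2⟩
          rcases Nat.lt_succ_iff_lt_or_eq.mp hk1 with h' | h'
          · exact ⟨h', hk2⟩
          · have hkk : k = ⟨i, hin⟩ := Fin.ext h'
            exact absurd (hkk ▸ hk2) hc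
  have hkey : ∀ m : ℤ, (Finset.univ.filter (fun k : Fin n => m ≤ j w k)).card =
      (Finset.univ.filter (fun k : Fin n => m ≤ h k)).card := by
    intro m
    have hc := hcount w m n le_rfl
    rw [hStop w, inf_top_eq, hdim m] at hc
    rw [hc]
    congr 1
    ext k
    simp [k.isLt]
  -- ## Part V : monotonicity of `j w`
  have hmonot : ∀ i i' : Fin n, (i' : ℕ) = (i : ℕ) + 1 → j w i ≤ j w i' := by
    intro i i' hii'
    set u := w * Equiv.swap i i' with hu
    have hfx : j u i = j w i := hfix i i' hii'
    have happ : ∀ k : Fin n, u k = w (Equiv.swap i i' k) := fun k => rfl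
    have hSuS : ∀ l : ℕ, l ≤ (i : ℕ) ∨ (i : ℕ) + 2 ≤ l → S u l = S w l := by
      intro l hl
      rw [hS, hS]
      congr 1
      ext x
      simp only [Set.mem_setOf_eq]
      constructor
      · rintro ⟨k, hk, rfl⟩
        refine ⟨Equiv.swap i i' k, ?_, by rw [happ]⟩
        rcases eq_or_ne k i with rfl | hki
        · rw [Equiv.swap_apply_left]; omega
        rcases eq_or_ne k i' with rfl | hki'
        · rw [Equiv.swap_apply_right]; omega
        · rw [Equiv.swap_apply_of_ne_of_ne hki hki']; exact hk
      · rintro ⟨k, hk, hx⟩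
        refine ⟨Equiv.swap i i' k, ?_, ?_⟩
        · rcases eq_or_ne k i with rfl | hki
          · rw [Equiv.swap_apply_left]; omega
          rcases eq_or_ne k i' with rfl | hki'
          · rw [Equiv.swap_apply_right]; omega
          · rw [Equiv.swap_apply_of_ne_of_ne hki hki']; exact hk
        · rw [happ, Equiv.swap_apply_self]; exact hx
    have hP := (hPiff u i (j u i)).mpr le_rfl
    obtain ⟨y, hy, hyn⟩ := SetLike.not_le_iff_exists.mp hP
    have hy1 : y ∈ Fil (j w i) := by rw [← hfx]; exact (Submodule.mem_inf.mp hy).1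
    have hy2 : y ∈ S u ((i : ℕ) + 1) := (Submodule.mem_inf.mp hy).2
    refine (hPiff w i' (j w i)).mp ?_
    intro hle
    have hy3 : y ∈ S w (i' : ℕ) := by
      apply hle
      refine Submodule.mem_inf.mpr ⟨hy1, ?_⟩
      have hmon : S u ((i : ℕ) + 1) ≤ S u ((i : ℕ) + 2) := hSmono u _ _ (by omega)
      have h4 : y ∈ S u ((i : ℕ) + 2) := hmon hy2
      rw [hSuS ((i : ℕ) + 2) (Or.inr le_rfl)] at h4
      rw [show (i' : ℕ) + 1 = (i : ℕ) + 2 from by omega]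
      exact h4
    have hyw : ∀ k : Fin n, e.repr y (w k) ≠ 0 → (k : ℕ) < (i : ℕ) + 1 := by
      intro k hk
      have := (hmemS w (i' : ℕ) y).mp hy3 k hk
      omega
    have hyu := (hmemS u ((i : ℕ) + 1) y).mp hy2
    have hyi : y ∈ S u (i : ℕ) := by
      rw [hmemS]
      intro k hk
      by_cases hki : k = i
      · exfalso
        subst hki
        have hui : u k = w i' := by rw [happ, Equiv.swap_apply_left]
        have hrep : e.repr y (w i') ≠ 0 := by rw [← hui]; exact hk
        have := hyw i' hrep
        omega
      by_cases hki' : k = i'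
      · exfalso
        subst hki'
        have := hyu k hk
        omega
      · have huk : u k = w k := by rw [happ, Equiv.swap_apply_of_ne_of_ne hki hki']
        have hk1 := hyw k (by rw [← huk]; exact hk)
        have hne : (k : ℕ) ≠ (i : ℕ) := fun hh => hki (Fin.ext hh)
        omega
    exact hyn hyi
  -- ## Part VI : conclusion
  have hinj : Function.Injective (j w) := by
    intro a b hab
    by_contra hne
    have hcv : ∀ (f : Fin n → ℤ) (v : ℤ),
        (Finset.univ.filter (fun k => v ≤ f k)).card =
        (Finset.univ.filter (fun k => v + 1 ≤ f k)).card +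
        (Finset.univ.filter (fun k => f k = v)).card := by
      intro f v
      rw [← Finset.card_union_of_disjoint (by
        rw [Finset.disjoint_left]
        intro k hk1 hk2
        simp only [Finset.mem_filter, Finset.mem_univ, true_and] at hk1 hk2
        omega)]
      congr 1
      ext k
      simp only [Finset.mem_union, Finset.mem_filter, Finset.mem_univ, true_and]
      omega
    have h1 := hcv (j w) (j w a)
    have h2 := hcv h (j w a)
    rw [hkey (j w a), hkey (j w a + 1)] at h1
    have hle1 : (Finset.univ.filter (fun k => h k = j w a)).card ≤ 1 := by
      apply Finset.card_le_one.mpr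
      intro x hx y hy
      simp only [Finset.mem_filter] at hx hy
      exact hmono.injective (hx.2.trans hy.2.symm)
    have hge2 : 2 ≤ (Finset.univ.filter (fun k => j w k = j w a)).card := by
      refine Finset.one_lt_card.mpr ⟨a, ?_, b, ?_, hne⟩
      · simp
      · simp only [Finset.mem_filter, Finset.mem_univ, true_and]
        exact hab.symm
    omega
  have hjmono : Monotone (j w) := by
    have hstep : ∀ (k : ℕ) (a b : Fin n), (b : ℕ) = (a : ℕ) + k → j w a ≤ j w b := by
      intro k
      induction k with
      | zero =>
        intro a b hb
        have : a = b := Fin.ext (by omega)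
        rw [this]
      | succ k ih =>
        intro a b hb
        have hc : (a : ℕ) + k < n := by have := b.isLt; omega
        refine le_trans (ih a ⟨(a : ℕ) + k, hc⟩ rfl) ?_
        exact hmonot ⟨(a : ℕ) + k, hc⟩ b (by simp only [Fin.val_mk]; omega)
    intro a b hab
    exact hstep ((b : ℕ) - (a : ℕ)) a b (by
      have := Fin.le_def.mp hab
      omega)
  have hjsm : StrictMono (j w) := hjmono.strictMono_of_injective hinj
  funext i
  have hT1 : h i ≤ j w i := by
    have hcard : (Finset.univ.filter fun k => h i ≤ j w k).card = n - (i : ℕ) := by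
      rw [hkey (h i), aux_sm_count hmono i]
    have hmem := aux_upclosed (Finset.univ.filter fun k => h i ≤ j w k)
      (fun a b hab ha => by
        simp only [Finset.mem_filter, Finset.mem_univ, true_and] at *
        exact le_trans ha (hjmono hab)) i (by omega)
    simpa using hmem
  have hT2 : j w i ≤ h i := by
    have hcard : (Finset.univ.filter fun k => j w i ≤ h k).card = n - (i : ℕ) := by
      rw [← hkey (j w i), aux_sm_count hjsm i]
    have hmem := aux_upclosed (Finset.univ.filter fun k => j w i ≤ h k)
      (fun a b hab ha => by
        simp only [Finset.mem_filter, Finset.mem_univ, true_and] at *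
        exact le_trans ha (hmono.monotone hab)) i (by omega)
    simpa using hmem
  omega
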